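/- Let φ : ℕⁿ → ℂ be such that Φ(ξ) = Σ_{x ∈ ℕⁿ} φ(x) ξ^x converges absolutely for all ξ ∈ ℂⁿ with |ξ_j| < ρ_j (j = 1,…,n). Fix τ ∈ ℕⁿ, J ∈ {0,1}ⁿ, and radii 0 < R_j < ρ_j. Then for every z ∈ ℂⁿ with |z_j| < R_j for all j, the series Φ_{τ,J}(z) = Σ_{y ∈ ℕⁿ with y_k = 0 whenever J_k = 0} φ(τ+y) · z^{τ+y} converges absolutely, and Φ_{τ,J}(z) = z^τ / (2πi)ⁿ · ∮_Γ Φ(ξ) / ( (ξ−z)^J · ξ^{τ−J+I} ) dξ, where Γ is the torus {ξ ∈ ℂⁿ : |ξ_j| = R_j, j = 1,…,n}, (ξ−z)^J = Π_{j : J_j = 1} (ξ_j − z_j), ξ^{τ−J+I} = Π_j ξ_j^{τ_j − J_j + 1}, and ∮_Γ … dξ denotes the iterated contour integral over Γ (the torus integral). -/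

import Mathlib

open Complex MeasureTheory Metric Set
open scoped Real

lemma circ_pow {R : ℝ} (hR : 0 < R) (a t : ℕ) :
    (∮ ξ in C(0, R), ξ ^ a / ξ ^ (t + 1)) =
      if a = t then 2 * Real.pi * Complex.I else 0 := by
  have h1 : EqOn (fun ξ : ℂ => ξ ^ a / ξ ^ (t + 1))
      (fun ξ : ℂ => (ξ - 0) ^ ((a : ℤ) - (t + 1))) (sphere (0 : ℂ) R) := by
    intro ξ hξ
    have hξ0 : ξ ≠ 0 := by
      intro h; rw [mem_sphere_iff_norm, h] at hξ; simp at hξ; linarith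
    simp only [sub_zero, zpow_sub₀ hξ0]
    norm_cast
  rw [circleIntegral.integral_congr hR.le h1]
  split_ifs with h
  · subst h
    have h2 : EqOn (fun ξ : ℂ => (ξ - 0) ^ ((a : ℤ) - (a + 1)))
        (fun ξ : ℂ => (ξ - 0)⁻¹) (sphere (0 : ℂ) R) := by
      intro ξ _
      have : ((a : ℤ) - (a + 1)) = -1 := by ring
      simp [this]
    rw [circleIntegral.integral_congr hR.le h2]
    exact circleIntegral.integral_sub_inv_of_mem_ball (by simpa using hR)
  · exact circleIntegral.integral_sub_zpow_of_ne (by omega) 0 0 R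

lemma circ_pole_ge {R : ℝ} (hR : 0 < R) {z : ℂ} (hz : ‖z‖ < R) (m : ℕ) :
    (∮ ξ in C(0, R), (ξ - z)⁻¹ * ξ ^ m) = 2 * Real.pi * Complex.I * z ^ m := by
  have hd : DiffContOnCl ℂ (fun ξ : ℂ => ξ ^ m) (ball 0 R) :=
    (differentiable_pow m).diffContOnCl
  have := hd.circleIntegral_sub_inv_smul (w := z) (by simpa [mem_ball_zero_iff] using hz)
  simpa [smul_eq_mul] using this

lemma sphere_ne_zero {R : ℝ} (hR : 0 < R) {ξ : ℂ} (hξ : ξ ∈ sphere (0 : ℂ) R) : ξ ≠ 0 := by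
  intro h; rw [mem_sphere_iff_norm, h] at hξ; simp at hξ; linarith

lemma sphere_ne_z {R : ℝ} {z : ℂ} (hz : ‖z‖ < R) {ξ : ℂ}
    (hξ : ξ ∈ sphere (0 : ℂ) R) : ξ ≠ z := by
  intro h
  rw [mem_sphere_iff_norm, sub_zero, h] at hξ
  rw [← hξ] at hz
  exact lt_irrefl _ hz

lemma circ_zpow_inv {R : ℝ} (hR : 0 < R) (k : ℕ) (hk : 2 ≤ k) :
    (∮ ξ in C(0, R), (ξ ^ k)⁻¹) = 0 := by
  have h1 : EqOn (fun ξ : ℂ => (ξ ^ k)⁻¹)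
      (fun ξ : ℂ => (ξ - 0) ^ (-(k : ℤ))) (sphere (0 : ℂ) R) := by
    intro ξ hξ
    show (ξ ^ k)⁻¹ = (ξ - 0) ^ (-(k : ℤ))
    rw [sub_zero, zpow_neg, zpow_natCast]
  rw [circleIntegral.integral_congr hR.le h1]
  exact circleIntegral.integral_sub_zpow_of_ne (by omega) 0 0 R

lemma circ_pole_lt {R : ℝ} (hR : 0 < R) {z : ℂ} (hz : ‖z‖ < R) (m : ℕ) :
    (∮ ξ in C(0, R), (ξ - z)⁻¹ * (ξ ^ (m + 1))⁻¹) = 0 := by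
  rcases eq_or_ne z 0 with rfl | hz0
  · have h1 : EqOn (fun ξ : ℂ => (ξ - 0)⁻¹ * (ξ ^ (m + 1))⁻¹)
        (fun ξ : ℂ => (ξ - 0) ^ (-((m : ℤ) + 2))) (sphere (0 : ℂ) R) := by
      intro ξ hξ
      have hξ0 : ξ ≠ 0 := sphere_ne_zero hR hξ
      show (ξ - 0)⁻¹ * (ξ ^ (m + 1))⁻¹ = (ξ - 0) ^ (-((m : ℤ) + 2))
      rw [sub_zero, ← mul_inv, ← pow_succ']
      rw [show (-((m : ℤ) + 2)) = -(((m + 1 + 1 : ℕ)) : ℤ) by push_cast; ring,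
        zpow_neg, zpow_natCast]
    rw [circleIntegral.integral_congr hR.le h1]
    exact circleIntegral.integral_sub_zpow_of_ne (by omega) 0 0 R
  · have hint : ∀ k : ℕ, CircleIntegrable (fun ξ : ℂ => (ξ - z)⁻¹ * (ξ ^ k)⁻¹) 0 R := by
      intro k
      apply ContinuousOn.circleIntegrable hR.le
      exact ((continuousOn_id.sub continuousOn_const).inv₀
        (fun x hx => sub_ne_zero.2 (sphere_ne_z hz hx))).mul
        ((continuousOn_id.pow _).inv₀ (fun x hx => pow_ne_zero _ (sphere_ne_zero hR hx)))
    have hint2 : ∀ k : ℕ, CircleIntegrable (fun ξ : ℂ => (ξ ^ k)⁻¹) 0 R := by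
      intro k
      apply ContinuousOn.circleIntegrable hR.le
      exact (continuousOn_id.pow _).inv₀ (fun x hx => pow_ne_zero _ (sphere_ne_zero hR hx))
    have hsub0 : (∮ ξ in C(0, R), (ξ - (0 : ℂ))⁻¹) = 2 * Real.pi * Complex.I :=
      circleIntegral.integral_sub_inv_of_mem_ball (by simpa using hR)
    have hsubz : (∮ ξ in C(0, R), (ξ - z)⁻¹) = 2 * Real.pi * Complex.I :=
      circleIntegral.integral_sub_inv_of_mem_ball (by simpa [mem_ball_zero_iff] using hz)
    have key : ∀ k : ℕ, (∮ ξ in C(0, R), (ξ - z)⁻¹ * (ξ ^ (k + 1))⁻¹) =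
        z⁻¹ * ((∮ ξ in C(0, R), (ξ - z)⁻¹ * (ξ ^ k)⁻¹) - ∮ ξ in C(0, R), (ξ ^ (k + 1))⁻¹) := by
      intro k
      have heq : EqOn (fun ξ : ℂ => (ξ - z)⁻¹ * (ξ ^ (k + 1))⁻¹)
          (fun ξ : ℂ => z⁻¹ * ((ξ - z)⁻¹ * (ξ ^ k)⁻¹ - (ξ ^ (k + 1))⁻¹)) (sphere (0 : ℂ) R) := by
        intro ξ hξ
        have hξ0 : ξ ≠ 0 := sphere_ne_zero hR hξ
        have hξz : ξ - z ≠ 0 := sub_ne_zero.2 (sphere_ne_z hz hξ)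
        have hstep : (ξ - z)⁻¹ * (ξ ^ k)⁻¹ - (ξ ^ (k + 1))⁻¹
            = z * ((ξ - z)⁻¹ * (ξ ^ (k + 1))⁻¹) := by
          field_simp
          ring
        simp only
        rw [hstep, inv_mul_cancel_left₀ hz0]
      rw [circleIntegral.integral_congr hR.le heq]
      rw [show (fun ξ : ℂ => z⁻¹ * ((ξ - z)⁻¹ * (ξ ^ k)⁻¹ - (ξ ^ (k + 1))⁻¹))
        = (fun ξ : ℂ => z⁻¹ * (((ξ - z)⁻¹ * (ξ ^ k)⁻¹) - ((ξ ^ (k + 1))⁻¹))) from rfl]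
      rw [circleIntegral.integral_const_mul]
      congr 1
      exact circleIntegral.integral_sub (hint k) (hint2 (k + 1))
    induction m with
    | zero =>
        rw [key 0]
        have : (∮ ξ in C(0, R), (ξ - z)⁻¹ * (ξ ^ 0)⁻¹) = 2 * Real.pi * Complex.I := by
          rw [← hsubz]
          refine circleIntegral.integral_congr hR.le fun ξ _ => by simp
        have h2 : (∮ ξ in C(0, R), (ξ ^ (0 + 1))⁻¹) = 2 * Real.pi * Complex.I := by
          rw [← hsub0]
          refine circleIntegral.integral_congr hR.le fun ξ _ => by simp
        rw [this, h2, sub_self, mul_zero]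
    | succ k ih =>
        rw [key (k + 1), ih, circ_zpow_inv hR (k + 2) (by omega), sub_self, mul_zero]

/-- Per-coordinate circle-integral evaluation. -/
lemma circ_eval {R : ℝ} (hR : 0 < R) {z : ℂ} (hz : ‖z‖ < R) (J : Bool) (a t : ℕ) :
    (∮ ξ in C(0, R), ξ ^ a /
        ((if J then ξ - z else 1) * ξ ^ (t + 1 - (if J then 1 else 0)))) =
      if J then (if t ≤ a then 2 * Real.pi * Complex.I * z ^ (a - t) else 0)
      else (if a = t then 2 * Real.pi * Complex.I else 0) := by
  cases J with
  | false =>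
      simp only [if_neg (Bool.false_ne_true), Bool.false_eq_true, if_false, one_mul,
        Nat.sub_zero]
      exact circ_pow hR a t
  | true =>
      simp only [if_pos rfl, if_true, Nat.add_sub_cancel]
      rcases le_or_gt t a with hle | hlt
      · rw [← circ_pole_ge hR hz (a - t), if_pos hle]
        refine circleIntegral.integral_congr hR.le fun ξ hξ => ?_
        have hξ0 : ξ ≠ 0 := sphere_ne_zero hR hξ
        have hξz : ξ - z ≠ 0 := sub_ne_zero.2 (sphere_ne_z hz hξ)
        show ξ ^ a / ((ξ - z) * ξ ^ t) = (ξ - z)⁻¹ * ξ ^ (a - t)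
        rw [show a = (a - t) + t by omega, pow_add]
        field_simp
        congr 1
        omega
      · rw [if_neg (by omega)]
        refine (circleIntegral.integral_congr hR.le fun ξ hξ => ?_).trans
          (circ_pole_lt hR hz (t - a - 1))
        have hξ0 : ξ ≠ 0 := sphere_ne_zero hR hξ
        have hξz : ξ - z ≠ 0 := sub_ne_zero.2 (sphere_ne_z hz hξ)
        show ξ ^ a / ((ξ - z) * ξ ^ t) = (ξ - z)⁻¹ * (ξ ^ (t - a - 1 + 1))⁻¹
        rw [show t = a + (t - a - 1 + 1) by omega, pow_add]
        field_simp
        congr 2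
        omega

/-- Torus integral of a product of single-variable functions factors into circle integrals. -/
lemma torus_prod {n : ℕ} (f : Fin n → ℂ → ℂ) (R : Fin n → ℝ) :
    (∯ ξ in T((0 : Fin n → ℂ), R), ∏ j, f j (ξ j)) = ∏ j, ∮ ζ in C(0, R j), f j ζ := by
  have hcm : ∀ (j : Fin n) (t : Fin n → ℝ), torusMap 0 R t j = circleMap 0 (R j) (t j) := by
    intro j t; simp [torusMap, circleMap]
  rw [torusIntegral]
  have h1 : ∀ θ : Fin n → ℝ,
      ((∏ i, R i * exp (θ i * I) * I : ℂ) • ∏ j, f j (torusMap 0 R θ j))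
      = ∏ j, (fun s : ℝ => (R j * exp (s * I) * I) * f j (circleMap 0 (R j) s)) (θ j) := by
    intro θ
    rw [smul_eq_mul, ← Finset.prod_mul_distrib]
    exact Finset.prod_congr rfl fun j _ => by rw [hcm j θ]
  simp only [h1]
  set g : Fin n → ℝ → ℂ := fun j s => (R j * exp (s * I) * I) * f j (circleMap 0 (R j) s) with hg
  have h2 : (∫ θ : Fin n → ℝ in Icc (0 : Fin n → ℝ) fun _ => 2 * π, ∏ j, g j (θ j))
      = ∏ j, ∫ s : ℝ in Icc (0 : ℝ) (2 * π), g j s := by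
    rw [← integral_indicator measurableSet_Icc]
    have h3 : ∀ θ : Fin n → ℝ,
        (Icc (0 : Fin n → ℝ) fun _ => 2 * π).indicator (fun θ => ∏ j, g j (θ j)) θ
        = ∏ j, (Icc (0 : ℝ) (2 * π)).indicator (g j) (θ j) := by
      intro θ
      by_cases hθ : θ ∈ Icc (0 : Fin n → ℝ) fun _ => 2 * π
      · rw [indicator_of_mem hθ]
        refine Finset.prod_congr rfl fun j _ => ?_
        have hmem : θ j ∈ Icc (0 : ℝ) (2 * π) := mem_Icc.2 ⟨hθ.1 j, hθ.2 j⟩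
        rw [indicator_of_mem hmem]
      · rw [indicator_of_notMem hθ]
        rw [mem_Icc, Pi.le_def, Pi.le_def] at hθ
        push_neg at hθ
        rcases Classical.em (∀ i, 0 ≤ θ i) with hpos | hneg
        · obtain ⟨i, hi⟩ := hθ hpos
          exact (Finset.prod_eq_zero (Finset.mem_univ i)
            (by rw [indicator_of_notMem (by simp [mem_Icc]; intro _; linarith)])).symm
        · push_neg at hneg
          obtain ⟨i, hi⟩ := hneg
          exact (Finset.prod_eq_zero (Finset.mem_univ i)
            (by rw [indicator_of_notMem (by simp [mem_Icc]; intro h; linarith)])).symm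
    simp only [h3]
    rw [MeasureTheory.volume_pi]
    rw [MeasureTheory.integral_fintype_prod_eq_prod
      (f := fun j s => (Icc (0 : ℝ) (2 * π)).indicator (g j) s)]
    exact Finset.prod_congr rfl fun j _ => by rw [integral_indicator measurableSet_Icc]
  rw [h2]
  refine Finset.prod_congr rfl fun j _ => ?_
  rw [circleIntegral]
  rw [intervalIntegral.integral_of_le Real.two_pi_pos.le, integral_Icc_eq_integral_Ioc]
  refine setIntegral_congr_fun measurableSet_Ioc fun s _ => ?_
  simp only [g, deriv_circleMap, circleMap, smul_eq_mul, zero_add]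

lemma final_sum (n : ℕ) (φ : (Fin n → ℕ) → ℂ) (τ : Fin n → ℕ) (J : Fin n → Bool)
    (z : Fin n → ℂ) :
    (∏ j, z j ^ τ j) / (2 * Real.pi * Complex.I) ^ n *
      (∑' x : Fin n → ℕ, φ x * ∏ j,
        (if J j then (if τ j ≤ x j then 2 * Real.pi * Complex.I * z j ^ (x j - τ j) else 0)
          else (if x j = τ j then 2 * Real.pi * Complex.I else 0))) =
    ∑' y : {y : Fin n → ℕ // ∀ k, J k = false → y k = 0},
        φ (τ + (y : Fin n → ℕ)) * ∏ j, z j ^ (τ j + (y : Fin n → ℕ) j) := by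
  classical
  set c : ℂ := 2 * Real.pi * Complex.I with hc
  have hc0 : c ≠ 0 := by
    simp [hc, Real.pi_ne_zero, Complex.I_ne_zero, Complex.ofReal_ne_zero]
  set v : Fin n → ℕ → ℂ := fun j a =>
    (if J j then (if τ j ≤ a then c * z j ^ (a - τ j) else 0)
      else (if a = τ j then c else 0)) with hv
  set g : (Fin n → ℕ) → ℂ := fun x => φ x * ∏ j, v j (x j) with hgdef
  set S := {y : Fin n → ℕ // ∀ k, J k = false → y k = 0}
  set ι : S → (Fin n → ℕ) := fun y => τ + (y : Fin n → ℕ) with hι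
  have hinj : Function.Injective ι := by
    intro y₁ y₂ h
    ext j
    have := congrFun h j
    simpa [ι] using this
  have hsupp : Function.support g ⊆ Set.range ι := by
    intro x hx
    have hprod : ∀ j, v j (x j) ≠ 0 := by
      intro j
      intro h0
      apply hx
      rw [hgdef]
      simp only
      rw [Finset.prod_eq_zero (Finset.mem_univ j) h0, mul_zero]
    have hle : ∀ j, τ j ≤ x j := by
      intro j
      by_contra hlt
      have hne := hprod j
      rcases Bool.eq_false_or_eq_true (J j) with hJ | hJ
      · rw [hv] at hne; simp only [hJ, if_true] at hne
        exact hne (if_neg hlt)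
      · rw [hv] at hne; simp only [hJ] at hne
        simp only [Bool.false_eq_true, if_false] at hne
        exact hne (if_neg (by omega))
    have hJeq : ∀ k, J k = false → x k = τ k := by
      intro k hk
      have := hprod k
      rw [hv] at this; simp only [hk] at this
      by_contra hne
      exact this (by simp [hne])
    refine ⟨⟨fun j => x j - τ j, fun k hk => by have := hJeq k hk; simp only; omega⟩, ?_⟩
    ext j
    simp only [ι, Pi.add_apply]
    have := hle j
    omega
  have hre : (∑' x : Fin n → ℕ, g x) = ∑' y : S, g (ι y) := (hinj.tsum_eq hsupp).symm
  have hterm : ∀ y : S, g (ι y) = c ^ n * (φ (τ + (y : Fin n → ℕ)) *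
      ∏ j, z j ^ ((y : Fin n → ℕ) j)) := by
    intro y
    have hval : ∀ j, v j ((ι y) j) = c * z j ^ ((y : Fin n → ℕ) j) := by
      intro j
      rcases Bool.eq_false_or_eq_true (J j) with hJ | hJ
      · rw [hv]; simp only [hJ, if_true, ι, Pi.add_apply]
        rw [if_pos (Nat.le_add_right _ _), Nat.add_sub_cancel_left]
      · have hy0 : (y : Fin n → ℕ) j = 0 := y.2 j hJ
        rw [hv]; simp [hJ, ι, hy0]
    rw [hgdef]
    simp only [ι]
    rw [show ∀ (p : (Fin n → ℕ)) , (∏ j, v j ((τ + p) j)) = ∏ j, v j (τ j + p j) from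
      fun p => rfl]
    have : (∏ j, v j (τ j + (y : Fin n → ℕ) j)) = c ^ n * ∏ j, z j ^ ((y : Fin n → ℕ) j) := by
      rw [show (∏ j, v j (τ j + (y : Fin n → ℕ) j)) = ∏ j, (c * z j ^ ((y : Fin n → ℕ) j))
        from Finset.prod_congr rfl fun j _ => hval j]
      rw [Finset.prod_mul_distrib, Finset.prod_const, Finset.card_univ, Fintype.card_fin]
    rw [this]
    ring
  calc (∏ j, z j ^ τ j) / c ^ n * (∑' x : Fin n → ℕ, g x)
      = (∏ j, z j ^ τ j) / c ^ n * ∑' y : S, c ^ n * (φ (τ + (y : Fin n → ℕ)) *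
          ∏ j, z j ^ ((y : Fin n → ℕ) j)) := by rw [hre, tsum_congr hterm]
    _ = (∏ j, z j ^ τ j) * ∑' y : S, (φ (τ + (y : Fin n → ℕ)) *
          ∏ j, z j ^ ((y : Fin n → ℕ) j)) := by
        rw [tsum_mul_left, ← mul_assoc, div_mul_cancel₀ _ (pow_ne_zero n hc0)]
    _ = ∑' y : S, φ (τ + (y : Fin n → ℕ)) * ∏ j, z j ^ (τ j + (y : Fin n → ℕ) j) := by
        rw [← tsum_mul_left]
        refine tsum_congr fun y => ?_
        rw [show (∏ j, z j ^ (τ j + (y : Fin n → ℕ) j))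
          = (∏ j, z j ^ τ j) * ∏ j, z j ^ ((y : Fin n → ℕ) j) by
            rw [← Finset.prod_mul_distrib]; exact Finset.prod_congr rfl fun j _ => pow_add _ _ _]
        ring

/-- Part 1° of Lemma 1 of the paper: if `Φ(ξ) = Σ_x φ(x) ξ^x` converges absolutely for
`|ξ_j| < ρ_j`, then for `0 < R_j < ρ_j` and `|z_j| < R_j` the section
`Φ_{τ,J}(z) = Σ_{y : y_k = 0 for J_k = 0} φ(τ+y) z^{τ+y}` converges absolutely and is
given by the torus-integral formula
`Φ_{τ,J}(z) = z^τ/(2πi)ⁿ ∮_Γ Φ(ξ)/((ξ−z)^J ξ^{τ−J+I}) dξ` over the torus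
`Γ = {|ξ_j| = R_j}`. -/
theorem section_integral_representation
    (n : ℕ) (φ : (Fin n → ℕ) → ℂ) (ρ : Fin n → ℝ)
    (hconv : ∀ ξ : Fin n → ℂ, (∀ j, ‖ξ j‖ < ρ j) →
      Summable fun x : Fin n → ℕ => ‖φ x * ∏ j, ξ j ^ x j‖)
    (τ : Fin n → ℕ) (J : Fin n → Bool) (R : Fin n → ℝ)
    (hR : ∀ j, 0 < R j) (hRρ : ∀ j, R j < ρ j)
    (z : Fin n → ℂ) (hz : ∀ j, ‖z j‖ < R j) :
    (Summable fun y : {y : Fin n → ℕ // ∀ k, J k = false → y k = 0} =>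
      ‖φ (τ + (y : Fin n → ℕ)) * ∏ j, z j ^ (τ j + (y : Fin n → ℕ) j)‖) ∧
    (∑' y : {y : Fin n → ℕ // ∀ k, J k = false → y k = 0},
        φ (τ + (y : Fin n → ℕ)) * ∏ j, z j ^ (τ j + (y : Fin n → ℕ) j)) =
      (∏ j, z j ^ τ j) / (2 * Real.pi * Complex.I) ^ n *
        torusIntegral
          (fun ξ : Fin n → ℂ =>
            (∑' x : Fin n → ℕ, φ x * ∏ j, ξ j ^ x j) /
              ((∏ j, if J j then ξ j - z j else 1) *
                ∏ j, ξ j ^ (τ j + 1 - (if J j then 1 else 0))))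
          0 R := by
  classical
  have hzρ : ∀ j, ‖z j‖ < ρ j := fun j => (hz j).trans (hRρ j)
  -- Part 1: summability
  have hinj : Function.Injective
      (fun y : {y : Fin n → ℕ // ∀ k, J k = false → y k = 0} => τ + (y : Fin n → ℕ)) := by
    intro y₁ y₂ h
    ext j
    have := congrFun h j
    simpa using this
  have part1 : Summable fun y : {y : Fin n → ℕ // ∀ k, J k = false → y k = 0} =>
      ‖φ (τ + (y : Fin n → ℕ)) * ∏ j, z j ^ (τ j + (y : Fin n → ℕ) j)‖ := by
    have h := (hconv z hzρ).comp_injective hinj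
    exact h.congr fun y => rfl
  refine ⟨part1, ?_⟩
  -- setup
  set e : Fin n → ℕ := fun j => τ j + 1 - (if J j then 1 else 0) with he
  set d : Fin n → ℂ → ℂ := fun j ζ => (if J j then ζ - z j else 1) * ζ ^ (e j) with hd
  set tm : (Fin n → ℝ) → (Fin n → ℂ) := torusMap 0 R with htm
  have htms : ∀ (θ : Fin n → ℝ) (j : Fin n), tm θ j ∈ sphere (0 : ℂ) (R j) := by
    intro θ j
    rw [show tm θ j = circleMap 0 (R j) (θ j) from rfl]
    exact circleMap_mem_sphere _ (hR j).le _
  have habs : ∀ (θ : Fin n → ℝ) (j : Fin n), ‖tm θ j‖ = R j := by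
    intro θ j
    have := htms θ j
    rwa [mem_sphere_iff_norm, sub_zero] at this
  have hd0 : ∀ (θ : Fin n → ℝ) (j : Fin n), d j (tm θ j) ≠ 0 := by
    intro θ j
    have h0 : tm θ j ≠ 0 := sphere_ne_zero (hR j) (htms θ j)
    rw [hd]
    refine mul_ne_zero ?_ (pow_ne_zero _ h0)
    by_cases hJ : J j
    · simp only [hJ, if_true]
      exact sub_ne_zero.2 (sphere_ne_z (hz j) (htms θ j))
    · simp [hJ]
  set D : Fin n → ℝ := fun j => (if J j then R j - ‖z j‖ else 1) * R j ^ (e j)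
    with hD
  have hDpos : ∀ j, 0 < D j := by
    intro j
    rw [hD]
    refine mul_pos ?_ (pow_pos (hR j) _)
    by_cases hJ : J j
    · simp only [hJ, if_true]; linarith [hz j]
    · simp [hJ]
  have hDle : ∀ (θ : Fin n → ℝ) (j : Fin n), D j ≤ ‖d j (tm θ j)‖ := by
    intro θ j
    rw [hd, hD]
    simp only [norm_mul, norm_pow]
    rw [habs θ j]
    refine mul_le_mul_of_nonneg_right ?_ (pow_nonneg (hR j).le _)
    by_cases hJ : J j
    · simp only [hJ, if_true]
      calc R j - ‖z j‖
          = ‖tm θ j‖ - ‖z j‖ := by rw [habs θ j]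
        _ ≤ ‖tm θ j - z j‖ := by
            simpa using norm_sub_norm_le (tm θ j) (z j)
    · simp [hJ]
  set Dm : ℝ := ∏ j, D j with hDm
  have hDmpos : 0 < Dm := Finset.prod_pos fun j _ => hDpos j
  -- the individual integrand
  set G : (Fin n → ℕ) → (Fin n → ℝ) → ℂ := fun x θ =>
    (∏ i, (R i : ℂ) * exp ((θ i : ℂ) * Complex.I) * Complex.I) *
      (φ x * ∏ j, (tm θ j ^ x j / d j (tm θ j))) with hG
  -- pointwise identity on the torus
  have hpt : ∀ θ : Fin n → ℝ,
      ((∏ i, (R i : ℂ) * exp ((θ i : ℂ) * Complex.I) * Complex.I) •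
        ((∑' x : Fin n → ℕ, φ x * ∏ j, tm θ j ^ x j) /
          ((∏ j, if J j then tm θ j - z j else 1) *
            ∏ j, tm θ j ^ (τ j + 1 - (if J j then 1 else 0)))))
      = ∑' x : Fin n → ℕ, G x θ := by
    intro θ
    have hDprod : ((∏ j, if J j then tm θ j - z j else 1) *
        ∏ j, tm θ j ^ (τ j + 1 - (if J j then 1 else 0))) = ∏ j, d j (tm θ j) := by
      rw [← Finset.prod_mul_distrib]
    rw [hDprod, smul_eq_mul, ← tsum_div_const, ← tsum_mul_left]
    refine tsum_congr fun x => ?_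
    rw [hG]
    simp only
    congr 1
    rw [mul_div_assoc, ← Finset.prod_div_distrib]
  -- bounds
  set C : ℝ := (∏ j, R j) / Dm with hC
  have hnormG : ∀ (x : Fin n → ℕ) (θ : Fin n → ℝ),
      ‖G x θ‖ ≤ C * (‖φ x‖ * ∏ j, R j ^ x j) := by
    intro x θ
    rw [hG]
    simp only [norm_mul, norm_prod, norm_div, norm_pow]
    have h1 : ∀ i, ‖(R i : ℂ)‖ * ‖exp ((θ i : ℂ) * Complex.I)‖ * ‖Complex.I‖ = R i := by
      intro i
      simp [norm_exp_ofReal_mul_I, abs_of_pos (hR i)]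
    rw [Finset.prod_congr rfl fun i _ => h1 i]
    have h2 : (∏ j, ‖tm θ j‖ ^ x j / ‖d j (tm θ j)‖) ≤ (∏ j, R j ^ x j) / Dm := by
      rw [hDm, ← Finset.prod_div_distrib]
      refine Finset.prod_le_prod (fun j _ => by positivity) (fun j _ => ?_)
      rw [show ‖tm θ j‖ = ‖tm θ j‖ from rfl, habs θ j]
      exact div_le_div_of_nonneg_left (pow_nonneg (hR j).le _) (hDpos j)
        (by rw [show ‖d j (tm θ j)‖ = ‖d j (tm θ j)‖ from rfl]; exact hDle θ j)
    calc (∏ i, R i) * (‖φ x‖ * ∏ j, ‖tm θ j‖ ^ x j / ‖d j (tm θ j)‖)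
        ≤ (∏ i, R i) * (‖φ x‖ * ((∏ j, R j ^ x j) / Dm)) := by
          refine mul_le_mul_of_nonneg_left (mul_le_mul_of_nonneg_left h2 (norm_nonneg _))
            (Finset.prod_nonneg fun i _ => (hR i).le)
      _ = C * (‖φ x‖ * ∏ j, R j ^ x j) := by rw [hC]; ring
  -- integrability
  have hcont_tm : ∀ j, Continuous fun θ : Fin n → ℝ => tm θ j := by
    intro j
    exact (continuous_circleMap 0 (R j)).comp (continuous_apply j)
  have hcontG : ∀ x, Continuous (G x) := by
    intro x
    rw [hG]
    refine Continuous.mul ?_ (continuous_const.mul ?_)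
    · refine continuous_finset_prod _ fun i _ => Continuous.mul (Continuous.mul
        continuous_const ?_) continuous_const
      exact Complex.continuous_exp.comp ((Complex.continuous_ofReal.comp
        (continuous_apply i)).mul continuous_const)
    · refine continuous_finset_prod _ fun j _ => Continuous.div ((hcont_tm j).pow _) ?_ ?_
      · rw [hd]
        refine Continuous.mul ?_ ((hcont_tm j).pow _)
        by_cases hJ : J j
        · simp only [hJ, if_true]
          exact (hcont_tm j).sub continuous_const
        · simp only [hJ, if_false]
          exact continuous_const
      · exact fun θ => hd0 θ j
  set box : Set (Fin n → ℝ) := Icc (0 : Fin n → ℝ) (fun _ => 2 * π) with hbox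
  have hint : ∀ x, Integrable (G x) (volume.restrict box) :=
    fun x => ((hcontG x).continuousOn).integrableOn_compact isCompact_Icc
  have hvolbox : (volume box).toReal = (2 * π) ^ n := by
    rw [hbox]
    simp only [Pi.zero_def, Real.volume_Icc_pi_toReal fun _ => Real.two_pi_pos.le]
    simp
  have hIb : ∀ x, (∫ θ in box, ‖G x θ‖) ≤ (C * (‖φ x‖ * ∏ j, R j ^ x j)) * (2 * π) ^ n := by
    intro x
    have h1 : ‖∫ θ in box, ‖G x θ‖‖ ≤ (C * (‖φ x‖ * ∏ j, R j ^ x j)) * (volume box).toReal :=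
      norm_setIntegral_le_of_norm_le_const measure_Icc_lt_top
        (fun θ _ => by rw [Real.norm_of_nonneg (norm_nonneg _)]; exact hnormG x θ)
    rw [hvolbox] at h1
    exact le_trans (le_abs_self _) h1
  have hsummR : Summable fun x : Fin n → ℕ => ‖φ x‖ * ∏ j, R j ^ x j := by
    have h := hconv (fun j => (R j : ℂ)) (fun j => by
      simpa [abs_of_pos (hR j)] using hRρ j)
    refine h.congr fun x => ?_
    simp [norm_mul, norm_prod, norm_pow, Complex.norm_real, abs_of_pos (hR _)]
  have hsumI : Summable fun x : Fin n → ℕ => ∫ θ in box, ‖G x θ‖ := by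
    refine Summable.of_nonneg_of_le (fun x => integral_nonneg fun θ => norm_nonneg _)
      hIb ?_
    have := (hsummR.mul_left (C * (2 * π) ^ n))
    refine this.congr fun x => ?_
    ring
  -- the main computation
  rw [torusIntegral]
  have hswap : (∫ θ in box,
      (∏ i : Fin n, (R i : ℂ) * exp ((θ i : ℂ) * Complex.I) * Complex.I) •
        ((∑' x : Fin n → ℕ, φ x * ∏ j, tm θ j ^ x j) /
          ((∏ j, if J j then tm θ j - z j else 1) *
            ∏ j, tm θ j ^ (τ j + 1 - (if J j then 1 else 0)))))
      = ∑' x : Fin n → ℕ, ∫ θ in box, G x θ := by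
    rw [setIntegral_congr_fun measurableSet_Icc (fun θ _ => hpt θ)]
    exact (integral_tsum_of_summable_integral_norm hint hsumI).symm
  rw [hswap]
  have hterm : ∀ x : Fin n → ℕ, (∫ θ in box, G x θ) = φ x * ∏ j,
      (if J j then (if τ j ≤ x j then 2 * Real.pi * Complex.I * z j ^ (x j - τ j) else 0)
        else (if x j = τ j then 2 * Real.pi * Complex.I else 0)) := by
    intro x
    have h1 : (∫ θ in box, G x θ)
        = ∯ ξ in T((0 : Fin n → ℂ), R), φ x * ∏ j, (ξ j ^ x j / d j (ξ j)) := by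
      rw [torusIntegral]
      refine setIntegral_congr_fun measurableSet_Icc fun θ _ => ?_
      rw [hG, smul_eq_mul]
    rw [h1, torusIntegral_const_mul, torus_prod (fun j ζ => ζ ^ x j / d j ζ) R]
    congr 1
    refine Finset.prod_congr rfl fun j _ => ?_
    rw [hd]
    exact circ_eval (hR j) (hz j) (J j) (x j) (τ j)
  rw [tsum_congr hterm]
  exact (final_sum n φ τ J z).symm
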